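/- Let f : F_2^n → F_2^n be a non-expansive Boolean network, i.e., d(f(x), f(y)) ≤ d(x,y) for all x, y, where d is the Hamming distance. If f has a cyclic attractor, then G(f) has a local negative cycle, i.e., there exists x ∈ F_2^n such that the local interaction graph G(f)(x) contains a negative cycle. -/

import Mathlib

/-- States of a Boolean network on `n` components: `F_2^n`. -/
abbrev St (n : ℕ) := Fin n → ZMod 2

/-- The unit vector `e^i`. -/
def uv {n : ℕ} (i : Fin n) : St n := fun j => if j = i then 1 else 0

/-- There is an edge from `j` to `i` in the local interaction graph `G(f)(x)`,
i.e. `∂_j f_i (x) = 1`. -/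
def hasEdge {n : ℕ} (f : St n → St n) (x : St n) (j i : Fin n) : Prop :=
  f (x + uv j) i ≠ f x i

/-- `(j,i)` is a positive edge of `G(f)(x)`. -/
def edgePos {n : ℕ} (f : St n → St n) (x : St n) (j i : Fin n) : Prop :=
  hasEdge f x j i ∧ x j = f x i

/-- `(j,i)` is a negative edge of `G(f)(x)`. -/
def edgeNeg {n : ℕ} (f : St n → St n) (x : St n) (j i : Fin n) : Prop :=
  hasEdge f x j i ∧ x j ≠ f x i

/-- The local interaction graph `G(f)(x)` has a negative (elementary, directed) cycle:
a cyclic sequence of pairwise distinct vertices, each consecutive pair being an edge of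
`G(f)(x)`, with an odd number of negative edges. -/
def hasNegCycleAt {n : ℕ} (f : St n → St n) (x : St n) : Prop :=
  ∃ (m : ℕ) (v : Fin (m + 1) → Fin n), Function.Injective v ∧
    (∀ k, hasEdge f x (v k) (v (k + 1))) ∧
    Odd (Nat.card {k : Fin (m + 1) // edgeNeg f x (v k) (v (k + 1))})

/-- `f` is an and-net: each coordinate function is a product of literals. -/
def IsAndNet {n : ℕ} (f : St n → St n) : Prop :=
  ∀ i : Fin n, ∃ P N : Finset (Fin n), Disjoint P N ∧
    ∀ x : St n, f x i = (∏ j ∈ P, x j) * ∏ j ∈ N, (x j + 1)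

/-- Reachability in the asynchronous dynamics `Γ(f)`. -/
def Reach {n : ℕ} (f : St n → St n) : St n → St n → Prop :=
  Relation.ReflTransGen (fun x y => ∃ i, f x i ≠ x i ∧ y = x + uv i)

/-- `A` is a cyclic attractor of `f`: a nonempty terminal strongly connected component
of `Γ(f)` (nonempty, closed under the moves of `Γ(f)`, strongly connected) which is not
a singleton (equivalently, does not consist of a fixed point). -/
def IsCyclicAttractor {n : ℕ} (f : St n → St n) (A : Set (St n)) : Prop :=
  A.Nonempty ∧
  (∀ x ∈ A, ∀ i, f x i ≠ x i → x + uv i ∈ A) ∧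
  (∀ x ∈ A, ∀ y ∈ A, Reach f x y) ∧
  ¬ ∃ a, A = {a}

namespace BN
variable {n : ℕ}

lemma zmod2_ne_iff : ∀ {a b : ZMod 2}, a ≠ b ↔ b = a + 1 := by decide
lemma zmod2_add_one_ne : ∀ a : ZMod 2, a + 1 ≠ a := by decide
lemma zmod2_aa : ∀ a : ZMod 2, a + 1 + 1 = a := by decide

@[simp] lemma uv_apply (i j : Fin n) : uv i j = if j = i then 1 else 0 := rfl

lemma add_uv_apply (x : St n) (i j : Fin n) : (x + uv i) j = x j + if j = i then 1 else 0 := by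
  simp [Pi.add_apply]

@[simp] lemma add_uv_self (x : St n) (i : Fin n) : x + uv i + uv i = x := by
  funext j; simp only [Pi.add_apply, uv_apply]
  split
  · exact zmod2_aa _
  · simp

lemma hd_eq_card (x y : St n) :
    hammingDist x y = (Finset.univ.filter fun i => x i ≠ y i).card := rfl

lemma flip_ne (x y : St n) (c : Fin n) (h : x c ≠ y c) :
    hammingDist (x + uv c) y + 1 = hammingDist x y := by
  rw [hd_eq_card, hd_eq_card]
  have heq : (Finset.univ.filter fun i => x i ≠ y i)
      = insert c (Finset.univ.filter fun i => (x + uv c) i ≠ y i) := by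
    ext j
    by_cases hj : j = c
    · subst hj; simp [h]
    · simp only [Finset.mem_insert, Finset.mem_filter, Finset.mem_univ, true_and, hj,
        false_or]
      rw [add_uv_apply, if_neg hj, add_zero]
  rw [heq, Finset.card_insert_of_notMem]
  simp only [Finset.mem_filter, Finset.mem_univ, true_and, add_uv_apply, if_pos rfl]
  rw [zmod2_ne_iff] at h
  rw [h]
  simp

lemma flip_eq (x y : St n) (c : Fin n) (h : x c = y c) :
    hammingDist (x + uv c) y = hammingDist x y + 1 := by
  have h2 : (x + uv c) c ≠ y c := by
    rw [add_uv_apply, if_pos rfl, ← h]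
    exact zmod2_add_one_ne _
  have := flip_ne (x + uv c) y c h2
  rw [add_uv_self] at this
  omega

lemma hd_le_one (u v : St n) (h : hammingDist u v ≤ 1) :
    u = v ∨ ∃ c, v = u + uv c ∧ u c ≠ v c := by
  rw [hd_eq_card] at h
  rcases Nat.le_one_iff_eq_zero_or_eq_one.mp h with hc | hc
  · left
    funext j
    by_contra hj
    have hmem : j ∈ (Finset.univ.filter fun i => u i ≠ v i) := by simp [hj]
    rw [Finset.card_eq_zero.mp hc] at hmem
    simp at hmem
  · right
    obtain ⟨c, hcs⟩ := Finset.card_eq_one.mp hc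
    have hmem : ∀ j, (u j ≠ v j) ↔ j = c := by
      intro j
      constructor
      · intro hj
        have hj2 : j ∈ (Finset.univ.filter fun i => u i ≠ v i) := by simp [hj]
        rw [hcs] at hj2; simpa using hj2
      · intro hj; subst hj
        have hj2 : j ∈ (Finset.univ.filter fun i => u i ≠ v i) := by rw [hcs]; simp
        simpa using hj2
    refine ⟨c, ?_, (hmem c).mpr rfl⟩
    funext j
    by_cases hj : j = c
    · subst hj
      have hne := (hmem j).mpr rfl
      rw [zmod2_ne_iff] at hne
      rw [add_uv_apply, if_pos rfl]; exact hne
    · have huv : u j = v j := by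
        by_contra hne; exact hj ((hmem j).mp hne)
      rw [add_uv_apply, if_neg hj, add_zero, huv]

lemma hd_add_right (u v w : St n) : hammingDist (u + w) (v + w) = hammingDist u v := by
  rw [hd_eq_card, hd_eq_card]
  congr 1
  apply Finset.filter_congr
  intro j _
  simp only [Pi.add_apply, ne_eq]
  constructor
  · intro h hh; exact h (by rw [hh])
  · intro h hh; exact h (add_right_cancel hh)


lemma reach_of_fixed {f : St n → St n} {x y : St n} (hr : Reach f x y) (hf : f x = x) :
    y = x := by
  induction hr with
  | refl => rfl
  | tail h step ih =>
      obtain ⟨i, hi, rfl⟩ := step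
      rw [ih] at hi
      rw [hf] at hi
      exact absurd rfl hi

lemma no_fixed (f : St n → St n)
    (hexp : ∀ x y : St n, hammingDist (f x) (f y) ≤ hammingDist x y)
    (hattr : ∃ A : Set (St n), IsCyclicAttractor f A) :
    ∀ z, f z ≠ z := by
  intro z hz
  obtain ⟨A, hne, hclosed, hconn, hnotsingle⟩ := hattr
  -- minimizer of distance to z within A
  have hfin : A.Finite := Set.toFinite A
  obtain ⟨x, hxs, hmin⟩ := Finset.exists_min_image hfin.toFinset (fun y => hammingDist z y)
    (by obtain ⟨a, ha⟩ := hne; exact ⟨a, hfin.mem_toFinset.mpr ha⟩)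
  have hxA : x ∈ A := hfin.mem_toFinset.mp hxs
  -- z agrees with x on unstable coordinates
  have hagree : ∀ i, f x i ≠ x i → z i = x i := by
    intro i hi
    by_contra hzi
    have hxz : x i ≠ z i := fun h => hzi (h.symm)
    have h1 : hammingDist (x + uv i) z + 1 = hammingDist x z := flip_ne x z i hxz
    have h2 : x + uv i ∈ A := hclosed x hxA i hi
    have h3 := hmin (x + uv i) (hfin.mem_toFinset.mpr h2)
    rw [hammingDist_comm z x, hammingDist_comm z (x + uv i)] at h3
    omega
  -- f x = x
  have hfx : f x = x := by
    have hle : hammingDist z (f x) ≤ hammingDist z x := by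
      have := hexp z x
      rwa [hz] at this
    have hsplit : (Finset.univ.filter fun j => z j ≠ f x j)
        = (Finset.univ.filter fun j => z j ≠ x j) ∪ (Finset.univ.filter fun j => f x j ≠ x j) := by
      ext j
      simp only [Finset.mem_filter, Finset.mem_univ, true_and, Finset.mem_union]
      by_cases hU : f x j = x j
      · rw [hU]; tauto
      · have hzj := hagree j hU
        constructor
        · intro _; right; exact hU
        · intro _; rw [hzj]; exact fun h => hU h.symm
    have hdisj : Disjoint (Finset.univ.filter fun j => z j ≠ x j)
        (Finset.univ.filter fun j => f x j ≠ x j) := by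
      rw [Finset.disjoint_left]
      intro j hj1 hj2
      simp only [Finset.mem_filter, Finset.mem_univ, true_and] at hj1 hj2
      exact hj1 (hagree j hj2)
    have hcard : hammingDist z (f x) = hammingDist z x
        + (Finset.univ.filter fun j => f x j ≠ x j).card := by
      rw [hd_eq_card z (f x), hsplit, Finset.card_union_of_disjoint hdisj, hd_eq_card z x]
    have hU0 : (Finset.univ.filter fun j => f x j ≠ x j).card = 0 := by omega
    funext j
    by_contra hj
    have : j ∈ (Finset.univ.filter fun j => f x j ≠ x j) := by simp [hj]
    rw [Finset.card_eq_zero.mp hU0] at this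
    simp at this
  -- contradiction with non-singleton strongly connected
  have hy : ∃ y ∈ A, y ≠ x := by
    by_contra hc
    push_neg at hc
    exact hnotsingle ⟨x, Set.eq_singleton_iff_unique_mem.mpr ⟨hxA, hc⟩⟩
  obtain ⟨y, hyA, hyx⟩ := hy
  exact hyx (reach_of_fixed (hconn x hxA y hyA) hfx)


lemma mod_window_unique (r s a : ℕ) (hr : 0 < r) (ha : a < r) (j : ℕ) (hj : j < r) :
    ((s + j) % r = a ↔ j = (a + r - s % r) % r) := by
  set b := s % r with hb
  have hblt : b < r := Nat.mod_lt _ hr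
  set j₀ := (a + r - b) % r with hj0
  have hj0lt : j₀ < r := Nat.mod_lt _ hr
  have hkey : (s + j₀) % r = a := by
    have h1 : s + j₀ ≡ b + (a + r - b) [MOD r] :=
      Nat.ModEq.add (Nat.mod_modEq s r).symm (Nat.mod_modEq _ r)
    have h2 : b + (a + r - b) = a + r := by omega
    have h3 : s + j₀ ≡ a [MOD r] := by
      rw [h2] at h1
      exact h1.trans (show (a + r) % r = a % r from Nat.add_mod_right a r)
    rw [Nat.ModEq] at h3
    rw [h3, Nat.mod_eq_of_lt ha]
  constructor
  · intro h
    have : s + j ≡ s + j₀ [MOD r] := by unfold Nat.ModEq; rw [h, hkey]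
    have hjj : j ≡ j₀ [MOD r] := Nat.ModEq.add_left_cancel' s this
    rw [Nat.ModEq, Nat.mod_eq_of_lt hj, Nat.mod_eq_of_lt hj0lt] at hjj
    exact hjj
  · rintro rfl
    exact hkey

lemma iff_ne_to_add : ∀ a b c d : ZMod 2, ((a ≠ b) ↔ (c ≠ d)) → a + b = c + d := by decide
lemma zl1 : ∀ a b c d : ZMod 2, a + b = c + d → b = a + (c + d) := by decide
lemma zl2 : ∀ a X Y K1 K2 : ZMod 2, X = a + K1 → Y = a + K2 → X + Y = K1 + K2 := by decide
lemma zl3 : ∀ A B C : ZMod 2, A + B = C → A + 1 + B = C → False := by decide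
lemma zl4 : ∀ a b c d : ZMod 2, a + b = c + d → b + d = a + c := by decide
lemma zl6 : ∀ A B C D K i1 i2 : ZMod 2, B = A + i1 → D = C + i2 → A + C = K → B + D = K → i1 = i2 := by
  decide
lemma zl7 : ∀ a : ZMod 2, a + a = 0 := by decide
lemma zl8 : ∀ a : ZMod 2, a + a = 1 → False := by decide
lemma zl9 : ∀ a : ZMod 2, a + (a + 1) = 1 := by decide

lemma char2_pi_cancel (u w : St n) : u + w + w = u := by
  funext j; show u j + w j + w j = u j
  have : ∀ a b : ZMod 2, a + b + b = a := by decide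
  exact this _ _

theorem core (L : ℕ) [NeZero L] (f : St n → St n) (eT : St n)
    (hexp : ∀ u v : St n, hammingDist (f u) (f v) ≤ hammingDist u v)
    (x : ZMod L → St n) (p : ZMod L → Fin n)
    (hx1 : ∀ t, x (t + 1) = x t + uv (p t))
    (hxf : ∀ t, f (x t) = x t + eT + uv (p t))
    (heTp : ∀ t, eT (p t) = 0) :
    hasNegCycleAt f (x 0) := by
  classical
  -- the translated map g
  set g : St n → St n := fun y => f y + eT with hg
  have hgexp : ∀ u v : St n, hammingDist (g u) (g v) ≤ hammingDist u v := by
    intro u v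
    show hammingDist (f u + eT) (f v + eT) ≤ _
    rw [hd_add_right]; exact hexp u v
  have hgx : ∀ t, g (x t) = x (t + 1) := by
    intro t
    show f (x t) + eT = _
    rw [hxf, hx1]
    have : x t + eT + uv (p t) + eT = x t + uv (p t) + eT + eT := by abel
    rw [this, char2_pi_cancel]
  -- isometry on the orbit
  have hiso : ∀ t s, hammingDist (x (t + 1)) (x (s + 1)) = hammingDist (x t) (x s) := by
    have key : ∑ ts : ZMod L × ZMod L, hammingDist (x (ts.1 + 1)) (x (ts.2 + 1))
        = ∑ ts : ZMod L × ZMod L, hammingDist (x ts.1) (x ts.2) := by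
      simpa using Equiv.sum_comp ((Equiv.addRight (1 : ZMod L)).prodCongr (Equiv.addRight (1 : ZMod L)))
        (fun ts => hammingDist (x ts.1) (x ts.2))
    have hle : ∀ ts ∈ (Finset.univ : Finset (ZMod L × ZMod L)),
        hammingDist (x (ts.1 + 1)) (x (ts.2 + 1)) ≤ hammingDist (x ts.1) (x ts.2) := by
      intro ts _
      rw [← hgx ts.1, ← hgx ts.2]
      exact hgexp _ _
    have hall := (Finset.sum_eq_sum_iff_of_le hle).mp key
    intro t s
    simpa using hall (t, s) (Finset.mem_univ _)
  -- flip rule for coordinates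
  have hflip : ∀ (t : ZMod L) (q : Fin n), x (t + 1) q = x t q + if q = p t then 1 else 0 := by
    intro t q; rw [hx1, add_uv_apply]
  -- perturbation lemma
  have hPERT : ∀ (t : ZMod L) (q c : Fin n), g (x t + uv q) = x (t + 1) + uv c →
      ∀ s, x t q ≠ x s q → x (t + 1) c ≠ x (s + 1) c := by
    intro t q c hgq s hne
    intro hcc
    have h1 : hammingDist (x (t + 1) + uv c) (x (s + 1)) ≤ hammingDist (x t + uv q) (x s) := by
      rw [← hgq, ← hgx s]; exact hgexp _ _
    have h2 := flip_eq (x (t + 1)) (x (s + 1)) c hcc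
    have h3 := flip_ne (x t) (x s) q hne
    have h4 := hiso t s
    omega
  -- a column in Q is nonconstant
  have hnonconst : ∀ (t : ZMod L) (q : Fin n), (∃ t', p t' = q) → ∃ s, x t q ≠ x s q := by
    intro t q ⟨t', hq⟩
    have hne : x (t' + 1) q ≠ x t' q := by
      rw [hflip t' q, if_pos hq.symm]
      exact zmod2_add_one_ne _
    by_cases hh : x t q = x t' q
    · exact ⟨t' + 1, by rw [hh]; exact fun h => hne h.symm⟩
    · exact ⟨t', hh⟩
  -- derivative exists and lands in Q
  -- nonzero derivative
  have hNZ : ∀ (t : ZMod L) (q : Fin n), (∃ t', p t' = q) → g (x t + uv q) ≠ x (t + 1) := by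
    intro t q hq hcol
    obtain ⟨s, hs⟩ := hnonconst t q hq
    have h1 : hammingDist (x (t + 1)) (x (s + 1)) ≤ hammingDist (x t + uv q) (x s) := by
      rw [← hcol, ← hgx s]; exact hgexp _ _
    have h3 := flip_ne (x t) (x s) q hs
    have h4 := hiso t s
    omega
  have hDERIV : ∀ (t : ZMod L) (q : Fin n), (∃ t', p t' = q) →
      ∃ c, g (x t + uv q) = x (t + 1) + uv c ∧ (∃ t'', p t'' = c) := by
    intro t q hq
    have hd1 : hammingDist (x (t + 1)) (g (x t + uv q)) ≤ 1 := by
      rw [← hgx t, hammingDist_comm]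
      have := hgexp (x t + uv q) (x t)
      have h5 := flip_eq (x t) (x t) q rfl
      rw [hammingDist_self] at h5
      omega
    rcases hd_le_one _ _ hd1 with heq | ⟨c, hc, -⟩
    · exact absurd heq.symm (hNZ t q hq)
    · refine ⟨c, hc, ?_⟩
      by_contra hcQ
      push_neg at hcQ
      -- column c is constant
      have hconst : ∀ u : ZMod L, x u c = x 0 c := by
        have hnat : ∀ k : ℕ, x ((k : ZMod L)) c = x 0 c := by
          intro k
          induction k with
          | zero => norm_num
          | succ k ih =>
              have : ((k + 1 : ℕ) : ZMod L) = ((k : ℕ) : ZMod L) + 1 := by push_cast; ring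
              rw [this, hflip, if_neg (fun h => hcQ _ h.symm), add_zero, ih]
        intro u
        have : ((u.val : ℕ) : ZMod L) = u := ZMod.natCast_rightInverse u
        rw [← this]; exact hnat u.val
      have hall : ∀ s, x t q = x s q := by
        intro s
        by_contra hne
        exact hPERT t q c hc s hne (by rw [hconst (t + 1), hconst (s + 1)])
      obtain ⟨s, hs⟩ := hnonconst t q hq
      exact hs (hall s)
  -- the (E) identity
  -- B-sets: equal cardinality chain
  have hBkey : ∀ t s : ZMod L,
      (x (t + 1) (p t) ≠ x s (p t)) ↔ (x (t + 2) (p (t + 1)) ≠ x (s + 1) (p (t + 1))) := by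
    have hBstep : ∀ t s : ZMod L, x (t + 1) (p t) ≠ x s (p t) →
        x (t + 2) (p (t + 1)) ≠ x (s + 1) (p (t + 1)) := by
      intro t s hs
      have hgq : g (x (t + 1) + uv (p t)) = x (t + 1 + 1) + uv (p (t + 1)) := by
        have e1 : x (t + 1) + uv (p t) = x t := by rw [hx1 t]; exact add_uv_self _ _
        have e2 : x (t + 1 + 1) + uv (p (t + 1)) = x (t + 1) := by
          rw [hx1 (t + 1)]; exact add_uv_self _ _
        rw [e1, e2]; exact hgx t
      have := hPERT (t + 1) (p t) (p (t + 1)) hgq s hs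
      rw [show t + 1 + 1 = t + 2 by ring] at this
      exact this
    set B : ZMod L → Finset (ZMod L) :=
      fun t => Finset.univ.filter (fun s => x (t + 1) (p t) ≠ x s (p t)) with hB
    have hBmem : ∀ t s, s ∈ B t ↔ x (t + 1) (p t) ≠ x s (p t) := by
      intro t s; simp [hB]
    have hmono : ∀ t, (B t).card ≤ (B (t + 1)).card := by
      intro t
      apply Finset.card_le_card_of_injOn (fun s => s + 1)
      · intro s hs
        rw [Finset.mem_coe, hBmem] at hs ⊢
        have := hBstep t s hs
        rw [show t + 2 = t + 1 + 1 by ring] at this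
        exact this
      · intro a _ b _ h; exact add_right_cancel h
    have hchain : ∀ (t : ZMod L) (k : ℕ), (B t).card ≤ (B (t + k)).card := by
      intro t k
      induction k with
      | zero => norm_num
      | succ k ih =>
          have : (t + ((k : ℕ) : ZMod L)) + 1 = t + ((k + 1 : ℕ) : ZMod L) := by push_cast; ring
          calc (B t).card ≤ (B (t + (k : ℕ))).card := ih
            _ ≤ _ := by rw [← this]; exact hmono _
    have hconstcard : ∀ t t' : ZMod L, (B t).card = (B t').card := by
      intro t t'
      have h1 : ∀ u u' : ZMod L, (B u).card ≤ (B u').card := by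
        intro u u'
        have : u + (((u' - u).val : ℕ) : ZMod L) = u' := by
          rw [ZMod.natCast_rightInverse (u' - u)]; ring
        have := hchain u (u' - u).val
        rwa [‹u + (((u' - u).val : ℕ) : ZMod L) = u'›] at this
      exact le_antisymm (h1 t t') (h1 t' t)
    have himg : ∀ t, Finset.image (fun s => s + 1) (B t) = B (t + 1) := by
      intro t
      apply Finset.eq_of_subset_of_card_le
      · intro u hu
        obtain ⟨s, hs, rfl⟩ := Finset.mem_image.mp hu
        rw [hBmem] at hs ⊢
        have := hBstep t s hs
        rw [show t + 2 = t + 1 + 1 by ring] at this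
        exact this
      · rw [Finset.card_image_of_injective _ (fun a b h => by exact add_right_cancel h)]
        exact le_of_eq (hconstcard (t + 1) t)
    intro t s
    constructor
    · intro hs
      exact hBstep t s hs
    · intro hs
      have hmem : s + 1 ∈ B (t + 1) := by
        rw [hBmem]
        rw [show t + 1 + 1 = t + 2 by ring]
        exact hs
      rw [← himg t] at hmem
      obtain ⟨s', hs', he⟩ := Finset.mem_image.mp hmem
      have : s' = s := add_right_cancel he
      subst this
      exact (hBmem t s').mp hs'
  have hE' : ∀ t s : ZMod L,
      x s (p t) + x (s + 1) (p (t + 1)) = x (t + 1) (p t) + x (t + 2) (p (t + 1)) := by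
    intro t s
    exact zl4 _ _ _ _ (iff_ne_to_add _ _ _ _ (hBkey t s))
  -- next is well-defined
  have hNEXTWD : ∀ t t' : ZMod L, p t = p t' → p (t + 1) = p (t' + 1) := by
    intro t t' hpp
    by_contra hne
    have h1 : ∀ s, x (s + 1) (p (t + 1)) = x s (p t) + (x (t + 1) (p t) + x (t + 2) (p (t + 1))) :=
      fun s => zl1 _ _ _ _ (hE' t s)
    have h2 : ∀ s, x (s + 1) (p (t' + 1)) = x s (p t) + (x (t' + 1) (p t) + x (t' + 2) (p (t' + 1))) := by
      intro s
      have := hE' t' s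
      rw [← hpp] at this
      exact zl1 _ _ _ _ this
    obtain ⟨C, hC⟩ : ∃ C, ∀ u : ZMod L, x u (p (t + 1)) + x u (p (t' + 1)) = C := by
      refine ⟨(x (t + 1) (p t) + x (t + 2) (p (t + 1))) + (x (t' + 1) (p t) + x (t' + 2) (p (t' + 1))), fun u => ?_⟩
      have hu : (u - 1) + 1 = u := by ring
      have ha1 := h1 (u - 1)
      have ha2 := h2 (u - 1)
      rw [hu] at ha1 ha2
      exact zl2 _ _ _ _ _ ha1 ha2
    have ha : x (t + 2) (p (t + 1)) = x (t + 1) (p (t + 1)) + 1 := by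
      rw [show t + 2 = (t + 1) + 1 by ring, hflip, if_pos rfl]
    have hb : x (t + 2) (p (t' + 1)) = x (t + 1) (p (t' + 1)) := by
      rw [show t + 2 = (t + 1) + 1 by ring, hflip, if_neg (fun h => hne h.symm), add_zero]
    have e1 := hC (t + 1)
    have e2 := hC (t + 2)
    rw [ha, hb] at e2
    exact zl3 _ _ _ e1 e2
  -- ############ next function and its period ############
  have hnext_ex : ∀ t : ZMod L, ∃ q', ∀ t' : ZMod L, p t' = p t → p (t' + 1) = q' :=
    fun t => ⟨p (t + 1), fun t' h => hNEXTWD t' t h⟩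
  choose nextp hnextp using hnext_ex
  -- make it a function of the coordinate
  have hnext_ex2 : ∀ q : Fin n, ∃ c : Fin n, ∀ t : ZMod L, p t = q → p (t + 1) = c := by
    intro q
    by_cases h : ∃ t : ZMod L, p t = q
    · obtain ⟨t, ht⟩ := h
      exact ⟨nextp t, fun t' ht' => hnextp t t' (by rw [ht', ht])⟩
    · exact ⟨q, fun t ht => absurd ⟨t, ht⟩ h⟩
  choose next hnextspec using hnext_ex2
  have hnext : ∀ t : ZMod L, next (p t) = p (t + 1) := fun t => (hnextspec (p t) t rfl).symm
  have hpcast : ∀ k : ℕ, p ((k : ZMod L)) = next^[k] (p 0) := by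
    intro k
    induction k with
    | zero => simp
    | succ k ih =>
        have hc : ((k + 1 : ℕ) : ZMod L) = ((k : ℕ) : ZMod L) + 1 := by push_cast; ring
        rw [hc, ← hnext, ih, Function.iterate_succ_apply']
  have htp : ∀ t : ZMod L, p t = next^[t.val] (p 0) := by
    intro t
    conv_lhs => rw [← ZMod.natCast_rightInverse t]
    exact hpcast t.val
  have hL0 : 0 < L := Nat.pos_of_ne_zero (NeZero.ne L)
  have hper : Function.IsPeriodicPt next L (p 0) := by
    show next^[L] (p 0) = p 0
    rw [← hpcast, ZMod.natCast_self]
  set r := Function.minimalPeriod next (p 0) with hrdef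
  have hr0 : 0 < r := hper.minimalPeriod_pos hL0
  have hrL : r ∣ L := hper.minimalPeriod_dvd
  have hrLle : r ≤ L := Nat.le_of_dvd hL0 hrL
  have hitmod : ∀ k : ℕ, next^[k] (p 0) = next^[k % r] (p 0) :=
    fun k => (Function.iterate_mod_minimalPeriod_eq).symm
  have hinj : ∀ i j : ℕ, i < r → j < r → next^[i] (p 0) = next^[j] (p 0) → i = j := by
    have key : ∀ i j : ℕ, i < j → j < r → next^[i] (p 0) = next^[j] (p 0) → False := by
      intro i j hij hj h
      have hjL : j ≤ L := le_trans (le_of_lt hj) hrLle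
      have e1 : next^[L - j + j] (p 0) = p 0 := by
        rw [Nat.sub_add_cancel hjL]; exact hper
      have e2 : next^[L - j + i] (p 0) = p 0 := by
        rw [Function.iterate_add_apply] at e1 ⊢
        rw [h]; exact e1
      have hdvd : r ∣ (L - j + i) := Function.IsPeriodicPt.minimalPeriod_dvd e2
      have hdvd2 : r ∣ (L - (L - j + i)) := Nat.dvd_sub hrL hdvd
      have heq : L - (L - j + i) = j - i := by omega
      rw [heq] at hdvd2
      have : r ≤ j - i := Nat.le_of_dvd (by omega) hdvd2
      omega
    intro i j hi hj h
    rcases lt_trichotomy i j with hlt | heq | hgt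
    · exact absurd h (fun hh => key i j hlt hj hh)
    · exact heq
    · exact absurd h.symm (fun hh => key j i hgt hi hh)
  have hiter_iff : ∀ i j : ℕ, next^[i] (p 0) = next^[j] (p 0) ↔ i % r = j % r := by
    intro i j
    constructor
    · intro h
      rw [hitmod i, hitmod j] at h
      exact hinj _ _ (Nat.mod_lt _ hr0) (Nat.mod_lt _ hr0) h
    · intro h
      rw [hitmod i, hitmod j, h]
  -- ############ window count, antiperiodicity, level sets ############
  have hcastadd : ∀ (s : ZMod L) (j : ℕ), s + (j : ZMod L) = ((s.val + j : ℕ) : ZMod L) := by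
    intro s j
    conv_lhs => rw [← ZMod.natCast_rightInverse s]
    push_cast
    ring
  have hxk : ∀ (s : ZMod L) (q : Fin n) (k : ℕ),
      x (s + (k : ZMod L)) q
        = x s q + ∑ j ∈ Finset.range k, (if q = p (s + (j : ZMod L)) then (1 : ZMod 2) else 0) := by
    intro s q k
    induction k with
    | zero => simp
    | succ k ih =>
        have hc : s + ((k + 1 : ℕ) : ZMod L) = (s + ((k : ℕ) : ZMod L)) + 1 := by push_cast; ring
        rw [hc, hflip, ih, Finset.sum_range_succ]
        ring
  have hone : ∀ (s : ZMod L) (q : Fin n), (∃ t', p t' = q) →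
      (∑ j ∈ Finset.range r, (if q = p (s + (j : ZMod L)) then (1 : ZMod 2) else 0)) = 1 := by
    intro s q hq
    obtain ⟨t', rfl⟩ := hq
    set a : ℕ := t'.val % r with hadef
    have halt : a < r := Nat.mod_lt _ hr0
    set j₀ : ℕ := (a + r - s.val % r) % r with hj0def
    have hj0lt : j₀ < r := Nat.mod_lt _ hr0
    have hcond : ∀ j : ℕ, j < r → ((p t' = p (s + (j : ZMod L))) ↔ j = j₀) := by
      intro j hj
      rw [hcastadd s j, hpcast (s.val + j), htp t', hiter_iff]
      constructor
      · intro h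
        exact (mod_window_unique r s.val a hr0 halt j hj).mp h.symm
      · intro h
        exact ((mod_window_unique r s.val a hr0 halt j hj).mpr h).symm
    have : ∀ j ∈ Finset.range r,
        (if p t' = p (s + (j : ZMod L)) then (1 : ZMod 2) else 0) = (if j = j₀ then 1 else 0) := by
      intro j hj
      rw [Finset.mem_range] at hj
      by_cases h : j = j₀
      · rw [if_pos h, if_pos ((hcond j hj).mpr h)]
      · rw [if_neg h, if_neg (fun hh => h ((hcond j hj).mp hh))]
    rw [Finset.sum_congr rfl this, Finset.sum_ite_eq' (Finset.range r) j₀ (fun _ => (1 : ZMod 2)),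
      if_pos (Finset.mem_range.mpr hj0lt)]
  have hanti : ∀ (s : ZMod L) (q : Fin n), (∃ t', p t' = q) →
      x (s + ((r : ℕ) : ZMod L)) q = x s q + 1 := by
    intro s q hq
    rw [hxk s q r, hone s q hq]
  have hlevel : ∀ (q : Fin n), (∃ t', p t' = q) → ∀ v w : ZMod 2,
      (Finset.univ.filter fun s : ZMod L => x s q = v).card
        = (Finset.univ.filter fun s : ZMod L => x s q = w).card := by
    intro q hq
    have hstep : ∀ v : ZMod 2,
        (Finset.univ.filter fun s : ZMod L => x s q = v).card
          = (Finset.univ.filter fun s : ZMod L => x s q = v + 1).card := by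
      intro v
      apply Finset.card_bij' (fun s _ => s + ((r : ℕ) : ZMod L)) (fun s _ => s - ((r : ℕ) : ZMod L))
      · intro s hs
        rw [Finset.mem_filter] at hs ⊢
        refine ⟨Finset.mem_univ _, ?_⟩
        rw [hanti s q hq, hs.2]
      · intro s hs
        rw [Finset.mem_filter] at hs ⊢
        refine ⟨Finset.mem_univ _, ?_⟩
        have := hanti (s - ((r : ℕ) : ZMod L)) q hq
        rw [sub_add_cancel] at this
        have h2 : ∀ A B : ZMod 2, B = A + 1 → B = A + 1 → A = B + 1 := by decide
        have h3 : ∀ A B v : ZMod 2, B = A + 1 → B = v + 1 → A = v := by decide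
        exact h3 _ _ _ this hs.2
      · intro s _; exact add_sub_cancel_right s _
      · intro s _; exact sub_add_cancel s _
    intro v w
    have h2 : ∀ v w : ZMod 2, w = v ∨ w = v + 1 := by decide
    rcases h2 v w with rfl | rfl
    · rfl
    · exact hstep v
  -- ############ column chain ############
  have hchainE : ∀ α κ : ℕ, ∃ Δ : ZMod 2, ∀ u : ZMod L,
      x (u + ((κ : ℕ) : ZMod L)) (next^[α + κ] (p 0)) = x u (next^[α] (p 0)) + Δ := by
    intro α κ
    induction κ with
    | zero => exact ⟨0, by simp⟩
    | succ κ ih =>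
        obtain ⟨Δ, hΔ⟩ := ih
        set tκ : ZMod L := ((α + κ : ℕ) : ZMod L) with htκdef
        have hptκ : p tκ = next^[α + κ] (p 0) := hpcast (α + κ)
        have hstep : ∀ s : ZMod L, x (s + 1) (p (tκ + 1))
            = x s (p tκ) + (x (tκ + 1) (p tκ) + x (tκ + 2) (p (tκ + 1))) :=
          fun s => zl1 _ _ _ _ (hE' tκ s)
        refine ⟨Δ + (x (tκ + 1) (p tκ) + x (tκ + 2) (p (tκ + 1))), fun u => ?_⟩
        have hnx : p (tκ + 1) = next^[α + (κ + 1)] (p 0) := by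
          rw [← hnext tκ, hptκ, ← Function.iterate_succ_apply' next]
          rfl
        have hu : u + ((κ + 1 : ℕ) : ZMod L) = (u + ((κ : ℕ) : ZMod L)) + 1 := by
          push_cast; ring
        have hxx : x (u + ((κ : ℕ) : ZMod L)) (p tκ) = x u (next^[α] (p 0)) + Δ := by
          rw [hptκ]; exact hΔ u
        rw [hu, ← hnx, hstep (u + ((κ : ℕ) : ZMod L)), hxx]
        ring
  -- ############ rigidity at time 0 ############
  have hrig : ∀ q : Fin n, (∃ t', p t' = q) → g (x 0 + uv q) = x 1 + uv (next q) := by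
    intro q hq
    obtain ⟨c, hgc, hcQ⟩ := hDERIV 0 q hq
    suffices hcn : c = next q by
      rw [← hcn]
      rw [zero_add] at hgc
      exact hgc
    obtain ⟨tq, htq⟩ := hq
    obtain ⟨tc, htc⟩ := hcQ
    set α : ℕ := tq.val with hα
    set β : ℕ := tc.val with hβ
    have hqα : q = next^[α] (p 0) := by rw [← htq]; exact htp tq
    have hcβ : c = next^[β] (p 0) := by rw [← htc]; exact htp tc
    set κ : ℕ := (β % r + r - α % r) % r with hκdef
    have hκlt : κ < r := Nat.mod_lt _ hr0
    have hκmod : (α + κ) % r = β % r :=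
      (mod_window_unique r α (β % r) hr0 (Nat.mod_lt _ hr0) κ hκlt).mpr rfl
    have hcκ : next^[α + κ] (p 0) = c := by
      rw [hcβ]
      exact (hiter_iff _ _).mpr hκmod
    obtain ⟨Δ, hΔ⟩ := hchainE α κ
    have hΔ' : ∀ u : ZMod L, x (u + ((κ : ℕ) : ZMod L)) c = x u q + Δ := by
      intro u
      rw [hqα, ← hcκ]
      exact hΔ u
    have hinc : ∀ s, x 0 q ≠ x s q → x 1 c ≠ x (s + 1) c := by
      intro s hs
      have := hPERT 0 q c hgc s hs
      rwa [zero_add] at this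
    set w₀ : ZMod L := 1 - ((κ : ℕ) : ZMod L) with hw₀
    have hx1c : x 1 c = x w₀ q + Δ := by
      have := hΔ' w₀
      rwa [show w₀ + ((κ : ℕ) : ZMod L) = 1 by rw [hw₀]; ring] at this
    have hxsc : ∀ s, x (s + 1) c = x (s + w₀) q + Δ := by
      intro s
      have := hΔ' (s + w₀)
      rwa [show s + w₀ + ((κ : ℕ) : ZMod L) = s + 1 by rw [hw₀]; ring] at this
    have hinc2 : ∀ s, x 0 q ≠ x s q → x w₀ q ≠ x (s + w₀) q := by
      intro s hs hcontra
      exact hinc s hs (by rw [hx1c, hxsc, hcontra])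
    have hiffs : ∀ s, (x 0 q ≠ x s q) ↔ (x w₀ q ≠ x (s + w₀) q) := by
      set Aset := Finset.univ.filter (fun s : ZMod L => x 0 q ≠ x s q) with hAset
      set Bset2 := Finset.univ.filter (fun s : ZMod L => x w₀ q ≠ x (s + w₀) q) with hBset2
      have hsub : Aset ⊆ Bset2 := by
        intro s hs
        rw [hAset, Finset.mem_filter] at hs
        rw [hBset2, Finset.mem_filter]
        exact ⟨Finset.mem_univ _, hinc2 s hs.2⟩
      have hcA : Aset.card = (Finset.univ.filter fun s : ZMod L => x s q = x 0 q + 1).card := by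
        congr 1
        apply Finset.filter_congr
        intro s _
        exact zmod2_ne_iff
      have hcB : Bset2.card = (Finset.univ.filter fun u : ZMod L => x u q = x w₀ q + 1).card := by
        rw [hBset2]
        apply Finset.card_bij' (fun s _ => s + w₀) (fun u _ => u - w₀)
        · intro s hs
          rw [Finset.mem_filter] at hs ⊢
          exact ⟨Finset.mem_univ _, zmod2_ne_iff.mp hs.2⟩
        · intro u hu
          rw [Finset.mem_filter] at hu ⊢
          refine ⟨Finset.mem_univ _, ?_⟩
          rw [sub_add_cancel]
          exact zmod2_ne_iff.mpr hu.2
        · intro s _; exact add_sub_cancel_right s _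
        · intro u _; exact sub_add_cancel u _
      have hcardeq : Bset2.card = Aset.card := by
        rw [hcA, hcB]
        exact hlevel q ⟨tq, htq⟩ _ _
      have hAB : Aset = Bset2 := Finset.eq_of_subset_of_card_le hsub (le_of_eq hcardeq)
      intro s
      constructor
      · exact hinc2 s
      · intro hs
        have : s ∈ Bset2 := by rw [hBset2, Finset.mem_filter]; exact ⟨Finset.mem_univ _, hs⟩
        rw [← hAB, hAset, Finset.mem_filter] at this
        exact this.2
    have hγ : ∀ s : ZMod L, x s q + x (s + w₀) q = x 0 q + x w₀ q := by
      intro s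
      exact zl4 _ _ _ _ (iff_ne_to_add _ _ _ _ (hiffs s))
    -- flip set invariance under + w₀
    have hflipinv : ∀ s : ZMod L, (q = p s) ↔ (q = p (s + w₀)) := by
      intro s
      have h1 := hflip s q
      have h2 := hflip (s + w₀) q
      have e1 := hγ s
      have e2 := hγ (s + 1)
      rw [show s + 1 + w₀ = s + w₀ + 1 by ring] at e2
      have hite : (if q = p s then (1 : ZMod 2) else 0) = (if q = p (s + w₀) then 1 else 0) :=
        zl6 _ _ _ _ _ _ _ h1 h2 e1 e2
      by_cases hps : q = p s <;> by_cases hps2 : q = p (s + w₀)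
      · exact iff_of_true hps hps2
      · rw [if_pos hps, if_neg hps2] at hite; exact absurd hite one_ne_zero
      · rw [if_neg hps, if_pos hps2] at hite; exact absurd hite.symm one_ne_zero
      · exact iff_of_false hps hps2
    have htqw : p (tq + w₀) = q := ((hflipinv tq).mp htq.symm).symm
    -- exponent computation
    have hκL : κ ≤ L := le_trans (le_of_lt hκlt) hrLle
    have hval : tq + w₀ = ((α + 1 + (L - κ) : ℕ) : ZMod L) := by
      have hcast : ((L - κ : ℕ) : ZMod L) = - ((κ : ℕ) : ZMod L) := by
        have : ((L - κ : ℕ) : ZMod L) + ((κ : ℕ) : ZMod L) = ((L : ℕ) : ZMod L) := by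
          rw [← Nat.cast_add, Nat.sub_add_cancel hκL]
        rw [ZMod.natCast_self] at this
        exact eq_neg_of_add_eq_zero_left this
      push_cast
      rw [hcast, hw₀]
      conv_lhs => rw [← ZMod.natCast_rightInverse tq]
      push_cast
      ring
    have hexp2 : next^[α + 1 + (L - κ)] (p 0) = next^[α] (p 0) := by
      rw [← hpcast, ← hval, htqw, hqα]
    have hmods := (hiter_iff _ _).mp hexp2
    -- derive κ ≡ 1 [MOD r]
    have hκ1 : κ % r = 1 % r := by
      have h1 : (α + 1 + (L - κ)) ≡ α [MOD r] := hmods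
      have h2 : (α + 1 + (L - κ)) + κ ≡ α + κ [MOD r] := h1.add_right κ
      have h3 : (α + 1 + (L - κ)) + κ = α + 1 + L := by omega
      rw [h3] at h2
      have h4 : α + 1 + L ≡ α + 1 + 0 [MOD r] :=
        Nat.ModEq.add_left (α + 1) ((Nat.modEq_zero_iff_dvd).mpr hrL)
      have h5 : α + 1 ≡ α + κ [MOD r] := by
        have := (h4.symm.trans h2)
        simpa using this
      have := Nat.ModEq.add_left_cancel' α h5.symm
      exact this
    have hβα : β % r = (α + 1) % r := by
      rw [← hκmod, Nat.add_mod α κ, hκ1, ← Nat.add_mod α 1]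
    have : c = next^[α + 1] (p 0) := by
      rw [hcβ]
      exact (hiter_iff _ _).mpr hβα
    rw [this, Function.iterate_succ_apply', ← hqα]
  -- ############ final assembly ############
  have hrigf : ∀ q : Fin n, (∃ t', p t' = q) → f (x 0 + uv q) = f (x 0) + uv (next q) := by
    intro q hq
    have h2 : f (x 0 + uv q) + eT = x 1 + uv (next q) := hrig q hq
    have h3 : f (x 0) + eT = x 1 := by
      have := hgx 0
      rw [zero_add] at this
      exact this
    calc f (x 0 + uv q) = f (x 0 + uv q) + eT + eT := (char2_pi_cancel _ _).symm
      _ = (x 1 + uv (next q)) + eT := by rw [h2]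
      _ = ((f (x 0) + eT) + uv (next q)) + eT := by rw [← h3]
      _ = f (x 0) + uv (next q) + eT + eT := by abel
      _ = f (x 0) + uv (next q) := char2_pi_cancel _ _
  have hfx0 : ∀ j : Fin n, f (x 0) j = x 0 j + eT j + (if j = p 0 then 1 else 0) := by
    intro j
    rw [hxf 0]
    rfl
  have heTQ : ∀ q : Fin n, (∃ t', p t' = q) → eT q = 0 := by
    rintro q ⟨t', rfl⟩; exact heTp t'
  have hInQ : ∀ a : ℕ, ∃ t', p t' = next^[a] (p 0) := fun a => ⟨((a : ℕ) : ZMod L), hpcast a⟩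
  have hm : r - 1 + 1 = r := Nat.succ_pred_eq_of_pos hr0
  set m : ℕ := r - 1 with hmdef
  set v : Fin (m + 1) → Fin n := fun k => next^[k.val] (p 0) with hvdef
  have hvinj : Function.Injective v := by
    intro k k' h
    have hk : k.val < r := by have := k.isLt; omega
    have hk' : k'.val < r := by have := k'.isLt; omega
    exact Fin.ext (hinj _ _ hk hk' h)
  have hvnext : ∀ k : Fin (m + 1), next (v k) = v (k + 1) := by
    intro k
    rw [hvdef]
    simp only []
    rw [Fin.val_add_one]
    by_cases hk : k = Fin.last m
    · rw [if_pos hk, hk]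
      show next (next^[(Fin.last m).val] (p 0)) = next^[0] (p 0)
      rw [← Function.iterate_succ_apply' next]
      show next^[m + 1] (p 0) = p 0
      rw [hm]
      exact Function.iterate_minimalPeriod
    · rw [if_neg hk]
      exact (Function.iterate_succ_apply' next k.val (p 0)).symm
  have hedges : ∀ k : Fin (m + 1), hasEdge f (x 0) (v k) (v (k + 1)) := by
    intro k
    show f (x 0 + uv (v k)) (v (k + 1)) ≠ f (x 0) (v (k + 1))
    rw [hrigf (v k) (hInQ k.val), Pi.add_apply, uv_apply, hvnext k, if_pos rfl]
    exact zmod2_add_one_ne _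
  have hveq : ∀ k k' : Fin (m + 1), v k = v k' ↔ k = k' := by
    intro k k'
    exact ⟨fun h => hvinj h, fun h => by rw [h]⟩
  have hodd : Odd (Nat.card {k : Fin (m + 1) // edgeNeg f (x 0) (v k) (v (k + 1))}) := by
    have hNcard : Nat.card {k : Fin (m + 1) // edgeNeg f (x 0) (v k) (v (k + 1))}
        = (Finset.univ.filter fun k : Fin (m + 1) => edgeNeg f (x 0) (v k) (v (k + 1))).card := by
      rw [Nat.card_eq_fintype_card]
      apply Fintype.card_subtype
    set N := (Finset.univ.filter fun k : Fin (m + 1) => edgeNeg f (x 0) (v k) (v (k + 1))).card with hN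
    have hcast : (N : ZMod 2) = 1 := by
      rw [hN, Finset.card_filter]
      push_cast
      have hterm : ∀ k : Fin (m + 1),
          ((if edgeNeg f (x 0) (v k) (v (k + 1)) then (1 : ZMod 2) else 0))
            = x 0 (v k) + (x 0 (v (k + 1)) + (if v (k + 1) = p 0 then 1 else 0)) := by
        intro k
        have hfv : f (x 0) (v (k + 1)) = x 0 (v (k + 1)) + (if v (k + 1) = p 0 then 1 else 0) := by
          rw [hfx0, heTQ (v (k + 1)) (hInQ (k + 1).val), add_zero]
        have hEN : edgeNeg f (x 0) (v k) (v (k + 1)) ↔ x 0 (v k) ≠ f (x 0) (v (k + 1)) :=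
          ⟨fun h => h.2, fun h => ⟨hedges k, h⟩⟩
        by_cases he : x 0 (v k) ≠ f (x 0) (v (k + 1))
        · rw [if_pos (hEN.mpr he), ← hfv]
          rw [zmod2_ne_iff] at he
          rw [he]
          have : ∀ a : ZMod 2, (1 : ZMod 2) = a + (a + 1) := by decide
          exact this _
        · rw [if_neg (fun hh => he (hEN.mp hh)), ← hfv]
          push_neg at he
          rw [← he]
          exact (zl7 _).symm
      rw [Finset.sum_congr rfl (fun k _ => hterm k)]
      rw [Finset.sum_add_distrib, Finset.sum_add_distrib]
      have hshift : ∑ k : Fin (m + 1), x 0 (v (k + 1)) = ∑ k : Fin (m + 1), x 0 (v k) := by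
        simpa using Equiv.sum_comp (Equiv.addRight (1 : Fin (m + 1))) (fun k => x 0 (v k))
      have hind : ∑ k : Fin (m + 1), (if v (k + 1) = p 0 then (1 : ZMod 2) else 0) = 1 := by
        have hcongr : ∀ k : Fin (m + 1),
            (if v (k + 1) = p 0 then (1 : ZMod 2) else 0) = (if k = -1 then 1 else 0) := by
          intro k
          have hv0 : v 0 = p 0 := by rw [hvdef]; simp
          have : (v (k + 1) = p 0) ↔ (k = -1) := by
            rw [← hv0, hveq]
            constructor
            · intro h; exact eq_neg_of_add_eq_zero_left h
            · intro h; rw [h]; exact neg_add_cancel 1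
          by_cases hk : k = -1
          · rw [if_pos hk, if_pos (this.mpr hk)]
          · rw [if_neg hk, if_neg (fun hh => hk (this.mp hh))]
        rw [Finset.sum_congr rfl (fun k _ => hcongr k)]
        rw [Finset.sum_ite_eq' Finset.univ (-1 : Fin (m + 1)) (fun _ => (1 : ZMod 2))]
        rw [if_pos (Finset.mem_univ _)]
      rw [hshift, hind]
      exact zl9 _
    rw [hNcard]
    rcases Nat.even_or_odd N with he | ho
    · exfalso
      obtain ⟨t, ht⟩ := he
      rw [ht] at hcast
      push_cast at hcast
      exact zl8 _ hcast
    · exact ho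
  exact ⟨m, v, hvinj, hedges, hodd⟩


lemma add_self_pi (u : St n) : u + u = 0 := by
  funext j
  show u j + u j = 0
  have : ∀ a : ZMod 2, a + a = 0 := by decide
  exact this _

theorem buildit (f : St n → St n)
    (hexp : ∀ u v : St n, hammingDist (f u) (f v) ≤ hammingDist u v)
    (hnofix : ∀ z, f z ≠ z)
    (hpos : ∀ (x : St n) (i : Fin n), f (x + uv i) i ≠ f x i → x i = f x i) :
    ∃ (L : ℕ) (_ : NeZero L) (eT : St n) (x : ZMod L → St n) (p : ZMod L → Fin n),
      (∀ t, x (t + 1) = x t + uv (p t)) ∧ (∀ t, f (x t) = x t + eT + uv (p t)) ∧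
      (∀ t, eT (p t) = 0) := by
  classical
  set Φ : St n → ℕ := fun y => hammingDist y (f y) with hΦ
  obtain ⟨x₀, -, hmin'⟩ := Finset.exists_min_image (Finset.univ : Finset (St n)) Φ
    ⟨(fun _ => 0), Finset.mem_univ _⟩
  have hmin : ∀ y, Φ x₀ ≤ Φ y := fun y => hmin' y (Finset.mem_univ _)
  obtain ⟨p₀, hp₀⟩ := Function.ne_iff.mp (hnofix x₀)
  set eT : St n := f x₀ + x₀ + uv p₀ with heT
  have heT0 : eT p₀ = 0 := by
    show (f x₀ + x₀ + uv p₀) p₀ = 0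
    have h1 : (f x₀ + x₀ + uv p₀) p₀ = f x₀ p₀ + x₀ p₀ + 1 := by
      show f x₀ p₀ + x₀ p₀ + uv p₀ p₀ = _
      simp [uv]
    rw [h1]
    have : ∀ a b : ZMod 2, a ≠ b → a + b + 1 = 0 := by decide
    exact this _ _ hp₀
  set INV : St n × Fin n → Prop := fun z => f z.1 = z.1 + eT + uv z.2 ∧ eT z.2 = 0 with hINV
  have hINV0 : INV (x₀, p₀) := by
    constructor
    · show f x₀ = x₀ + (f x₀ + x₀ + uv p₀) + uv p₀
      have : x₀ + (f x₀ + x₀ + uv p₀) + uv p₀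
          = f x₀ + (x₀ + x₀) + (uv p₀ + uv p₀) := by abel
      rw [this, add_self_pi, add_self_pi, add_zero, add_zero]
    · exact heT0
  -- the Φ value of INV states
  have hphiINV : ∀ z, INV z → Φ z.1 = hammingDist eT (0 : St n) + 1 := by
    rintro ⟨x, pp⟩ ⟨h1, h2⟩
    show hammingDist x (f x) = _
    rw [h1]
    have e1 : x + eT + uv pp = (eT + uv pp) + x := by abel
    have e2 : hammingDist x ((eT + uv pp) + x) = hammingDist (0 : St n) (eT + uv pp) := by
      have := hd_add_right (0 : St n) (eT + uv pp) x
      rwa [zero_add] at this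
    rw [e1, e2, hammingDist_comm]
    exact flip_eq eT 0 pp h2
  -- one step
  have hstep_ex : ∀ (x : St n) (pp : Fin n), INV (x, pp) → ∃ p', INV (x + uv pp, p') := by
    rintro x pp ⟨h1, h2⟩
    have hxpp : x pp ≠ f x pp := by
      rw [h1]
      show x pp ≠ x pp + eT pp + uv pp pp
      have huv : uv pp pp = 1 := by simp [uv]
      rw [h2, add_zero, huv]
      intro hc
      exact zmod2_add_one_ne (x pp) hc.symm
    have hflip1 : hammingDist (x + uv pp) x = 1 := by
      rw [flip_eq x x pp rfl, hammingDist_self]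
    have hled : hammingDist (f x) (f (x + uv pp)) ≤ 1 := by
      rw [hammingDist_comm]
      calc hammingDist (f (x + uv pp)) (f x) ≤ hammingDist (x + uv pp) x := hexp _ _
        _ = 1 := hflip1
    rcases hd_le_one _ _ hled with hcol | ⟨p', hp', -⟩
    · -- collapse: Φ decreases, contradiction
      exfalso
      have ha : hammingDist (x + uv pp) (f x) + 1 = hammingDist x (f x) := flip_ne x (f x) pp hxpp
      have hb : Φ (x + uv pp) = hammingDist (x + uv pp) (f x) := by
        show hammingDist (x + uv pp) (f (x + uv pp)) = _
        rw [← hcol]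
      have hc := hmin (x + uv pp)
      have hd : Φ x = hammingDist x (f x) := rfl
      have he : Φ x = hammingDist eT (0 : St n) + 1 := hphiINV (x, pp) ⟨h1, h2⟩
      have hf : Φ x₀ = hammingDist eT (0 : St n) + 1 := hphiINV (x₀, p₀) hINV0
      omega
    · -- one coordinate changed
      have hp'pp : p' ≠ pp := by
        intro hcontra
        subst hcontra
        have hne : f (x + uv p') p' ≠ f x p' := by
          rw [hp']
          show f x p' + uv p' p' ≠ f x p'
          have huv : uv p' p' = 1 := by simp [uv]
          rw [huv]
          exact zmod2_add_one_ne _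
        exact hxpp (hpos x p' hne)
      have heTp' : eT p' = 0 := by
        by_contra hcon
        have h1' : eT p' = 1 := by
          have : ∀ a : ZMod 2, a ≠ 0 → a = 1 := by decide
          exact this _ hcon
        -- Φ drops by 2
        have hdiff : (f x) p' ≠ (x + uv pp) p' := by
          rw [h1]
          have e1 : (x + eT + uv pp) p' = x p' + eT p' + (if p' = pp then 1 else 0) := rfl
          have e2 : (x + uv pp) p' = x p' + (if p' = pp then 1 else 0) := rfl
          rw [e1, e2, if_neg hp'pp, h1', add_zero, add_zero]
          exact zmod2_add_one_ne _
        have ha : hammingDist (f x + uv p') (x + uv pp) + 1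
            = hammingDist (f x) (x + uv pp) := flip_ne (f x) (x + uv pp) p' hdiff
        have hb : hammingDist (x + uv pp) (f x) + 1 = hammingDist x (f x) :=
          flip_ne x (f x) pp hxpp
        have hΦ1 : Φ (x + uv pp) = hammingDist (f x + uv p') (x + uv pp) := by
          show hammingDist (x + uv pp) (f (x + uv pp)) = _
          rw [hp', hammingDist_comm]
        have hc := hmin (x + uv pp)
        have he : Φ x = hammingDist eT (0 : St n) + 1 := hphiINV (x, pp) ⟨h1, h2⟩
        have hf : Φ x₀ = hammingDist eT (0 : St n) + 1 := hphiINV (x₀, p₀) hINV0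
        have hcomm : hammingDist (f x) (x + uv pp) = hammingDist (x + uv pp) (f x) :=
          hammingDist_comm _ _
        have hd : Φ x = hammingDist x (f x) := rfl
        omega
      refine ⟨p', ?_, heTp'⟩
      show f (x + uv pp) = x + uv pp + eT + uv p'
      rw [hp', h1]
      abel
  -- iterate the step
  set step : St n × Fin n → St n × Fin n :=
    fun z => if h : INV z then (z.1 + uv z.2, Classical.choose (hstep_ex z.1 z.2 h)) else z
    with hstepdef
  set orb : ℕ → St n × Fin n := fun k => step^[k] (x₀, p₀) with horb
  have hstep_inv : ∀ z, INV z → INV (step z) ∧ (step z).1 = z.1 + uv z.2 := by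
    intro z hz
    have : step z = (z.1 + uv z.2, Classical.choose (hstep_ex z.1 z.2 hz)) := dif_pos hz
    rw [this]
    exact ⟨Classical.choose_spec (hstep_ex z.1 z.2 hz), rfl⟩
  have hINViter : ∀ k, INV (orb k) := by
    intro k
    induction k with
    | zero => exact hINV0
    | succ k ih =>
        have : orb (k + 1) = step (orb k) := Function.iterate_succ_apply' step k _
        rw [this]
        exact (hstep_inv _ ih).1
  have horb1 : ∀ k, (orb (k + 1)).1 = (orb k).1 + uv ((orb k).2) := by
    intro k
    have : orb (k + 1) = step (orb k) := Function.iterate_succ_apply' step k _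
    rw [this]
    exact (hstep_inv _ (hINViter k)).2
  -- pigeonhole
  obtain ⟨A, B, hAB, hABeq⟩ := Finite.exists_ne_map_eq_of_infinite orb
  -- wlog A < B
  obtain ⟨a, L, hL0, haL⟩ : ∃ a L, 0 < L ∧ orb (a + L) = orb a := by
    rcases lt_or_gt_of_ne hAB with h | h
    · exact ⟨A, B - A, by omega, by rw [show A + (B - A) = B by omega]; exact hABeq.symm⟩
    · exact ⟨B, A - B, by omega, by rw [show B + (A - B) = A by omega]; exact hABeq⟩
  haveI : NeZero L := ⟨by omega⟩
  set O : ℕ → St n × Fin n := fun k => orb (a + k) with hO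
  have hOper : ∀ k, O (k + L) = O k := by
    intro k
    show orb (a + (k + L)) = orb (a + k)
    have h1 : orb (a + (k + L)) = step^[k] (orb (a + L)) := by
      rw [horb, ← Function.iterate_add_apply]
      congr 1
      omega
    have h2 : orb (a + k) = step^[k] (orb a) := by
      rw [horb, ← Function.iterate_add_apply]
      congr 1
      omega
    rw [h1, h2, haL]
  have hOq : ∀ s q, O (s + L * q) = O s := by
    intro s q
    induction q with
    | zero => simp
    | succ q ih =>
        rw [show s + L * (q + 1) = (s + L * q) + L by ring, hOper, ih]
  have hOmod : ∀ k, O (k % L) = O k := by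
    intro k
    conv_rhs => rw [show k = k % L + L * (k / L) from (Nat.mod_add_div k L).symm]
    rw [hOq]
  have hOcast : ∀ (t : ZMod L) (b : ℕ), O ((t + (b : ℕ)).val) = O (t.val + b) := by
    intro t b
    have h1 : (t + (b : ℕ)).val = (t.val + b % L) % L := by
      rw [ZMod.val_add, ZMod.val_natCast]
    have h2 : (t.val + b % L) % L = (t.val + b) % L := by
      conv_rhs => rw [Nat.add_mod]
      conv_lhs => rw [Nat.add_mod, Nat.mod_mod_of_dvd b (dvd_refl L)]
    rw [h1, h2, hOmod]
  refine ⟨L, inferInstance, eT, fun t => (O t.val).1, fun t => (O t.val).2, ?_, ?_, ?_⟩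
  · intro t
    show (O (t + 1).val).1 = (O t.val).1 + uv ((O t.val).2)
    have h1 : (t + 1).val = (t + ((1 : ℕ) : ZMod L)).val := by norm_num
    rw [h1, hOcast t 1]
    exact horb1 (a + t.val)
  · intro t
    exact (hINViter (a + t.val)).1
  · intro t
    exact (hINViter (a + t.val)).2


end BN

/-- If a non-expansive Boolean network (`d(f(x), f(y)) ≤ d(x,y)` for the Hamming
distance) has a cyclic attractor, then it has a local negative cycle. -/
theorem stmt_12 (n : ℕ) (f : St n → St n)
    (hexp : ∀ x y : St n, hammingDist (f x) (f y) ≤ hammingDist x y)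
    (hattr : ∃ A : Set (St n), IsCyclicAttractor f A) :
    ∃ x, hasNegCycleAt f x := by
  classical
  by_cases hneg : ∃ (x : St n) (i : Fin n), hasEdge f x i i ∧ x i ≠ f x i
  · -- a local negative loop
    obtain ⟨x, i, hE, hs⟩ := hneg
    refine ⟨x, 0, fun _ => i, ?_, ?_, ?_⟩
    · intro k k' _
      omega
    · intro k
      exact hE
    · have hcard : Nat.card {k : Fin 1 // edgeNeg f x ((fun _ => i) k) ((fun _ => i) (k + 1))} = 1 := by
        rw [Nat.card_eq_fintype_card]
        have : Fintype.card {k : Fin 1 // edgeNeg f x i i} = Fintype.card (Fin 1) :=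
          Fintype.card_congr (Equiv.subtypeUnivEquiv (fun k => ⟨hE, hs⟩))
        simpa using this
      rw [hcard]
      exact odd_one
  · push_neg at hneg
    have hnofix := BN.no_fixed f hexp hattr
    obtain ⟨L, hLinst, eT, x, p, h1, h2, h3⟩ :=
      BN.buildit f hexp hnofix (fun x i h => hneg x i h)
    exact ⟨x 0, BN.core L f eT hexp x p h1 h2 h3⟩
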